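/- Let $H_L$, $H_R$ be symmetric positive definite matrices and $I_{F2C}$, $I_{C2F}$ matrices satisfying $H_R I_{C2F} = I_{F2C}^T H_L$. If additionally $H_L(I - I_{F2C} I_{C2F}) \geq 0$ and $H_R(I - I_{C2F} I_{F2C}) \geq 0$ (as symmetric matrices, positive semi-definite), then the block matrix $X = \begin{pmatrix} H_L & -H_L I_{F2C} \\ -H_R I_{C2F} & H_R \end{pmatrix}$ is positive semi-definite. -/

import Mathlib

open Matrix

/-- With SBP-preserving interpolation and nonnegative Schur-complement-type
conditions, the interface block matrix `X` is positive semi-definite. -/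
theorem stmt_6 {nL nR : ℕ}
    (HL : Matrix (Fin nL) (Fin nL) ℝ) (HR : Matrix (Fin nR) (Fin nR) ℝ)
    (IF2C : Matrix (Fin nL) (Fin nR) ℝ) (IC2F : Matrix (Fin nR) (Fin nL) ℝ)
    (hHL : HL.PosDef) (hHR : HR.PosDef)
    (hSBP : HR * IC2F = IF2Cᵀ * HL)
    (h₁ : (HL * (1 - IF2C * IC2F)).PosSemidef)
    (h₂ : (HR * (1 - IC2F * IF2C)).PosSemidef) :
    (Matrix.fromBlocks HL (-(HL * IF2C)) (-(HR * IC2F)) HR).PosSemidef := by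
  have hadj : (-(HL * IF2C))ᴴ = -(HR * IC2F) := by
    rw [conjTranspose_neg, conjTranspose_mul, hHL.isHermitian.eq, hSBP,
      conjTranspose_eq_transpose_of_trivial]
  have hdet : IsUnit HL.det := isUnit_iff_ne_zero.mpr hHL.det_pos.ne'
  haveI : Invertible HL := HL.invertibleOfIsUnitDet hdet
  rw [show (-(HR * IC2F)) = (-(HL * IF2C))ᴴ from hadj.symm,
    PosDef.fromBlocks₁₁ _ _ hHL]
  have hinv : HL⁻¹ * HL = 1 := nonsing_inv_mul HL hdet
  have : HR - (-(HL * IF2C))ᴴ * HL⁻¹ * -(HL * IF2C) = HR * (1 - IC2F * IF2C) := by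
    rw [hadj, Matrix.neg_mul, Matrix.neg_mul, Matrix.mul_neg, neg_neg, Matrix.mul_assoc (HR * IC2F) HL⁻¹,
      ← Matrix.mul_assoc HL⁻¹ HL IF2C, hinv, Matrix.one_mul, Matrix.mul_sub, Matrix.mul_one,
      Matrix.mul_assoc HR IC2F IF2C]
  rw [this]
  exact h₂
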